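/- Let $X \sim \mathcal{N}(0, P)$ and $\zeta \sim \mathcal{N}(0, \sigma^2)$ be independent with $P, \sigma^2 > 0$, $W = X + \zeta$, and $G = \log_2\left(\frac{p_{W|X}(W|X)}{p_W(W)}\right)$ the information density (with $p_{W|X}(\cdot|x)$ the density of $\mathcal{N}(x,\sigma^2)$ and $p_W$ the density of $\mathcal{N}(0,P+\sigma^2)$). Then, measuring $G$ in nats (i.e., using the natural logarithm), $\mathrm{Var}(G) = \frac{P}{P + \sigma^2}$. -/

import Mathlib

open MeasureTheory ProbabilityTheory Real Filter Asymptotics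
open scoped ENNReal NNReal

namespace AWGNAux

lemma integrable_pow_mul_exp {b : ℝ} (hb : 0 < b) (n : ℕ) :
    Integrable (fun x : ℝ => x ^ n * Real.exp (-b * x ^ 2)) := by
  have hn : (-1 : ℝ) < (n : ℝ) :=
    lt_of_lt_of_le (by norm_num) (Nat.cast_nonneg n)
  have h := integrable_rpow_mul_exp_neg_mul_sq hb hn
  simpa [Real.rpow_natCast] using h

lemma tendsto_pow_mul_exp_atTop {b : ℝ} (hb : 0 < b) (n : ℕ) :
    Tendsto (fun x : ℝ => x ^ n * Real.exp (-b * x ^ 2)) atTop (nhds 0) := by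
  have h := rpow_mul_exp_neg_mul_sq_isLittleO_exp_neg hb (n : ℝ)
  have hlin : Tendsto (fun x : ℝ => -(1/2) * x) atTop atBot := by
    have h1 : Tendsto (fun x : ℝ => (1/2 : ℝ) * x) atTop atTop :=
      tendsto_id.const_mul_atTop (by norm_num)
    simpa [Function.comp_def, neg_mul] using tendsto_neg_atTop_atBot.comp h1
  have h2 := Real.tendsto_exp_atBot.comp hlin
  have := h.trans_tendsto (by simpa [Function.comp_def] using h2)
  simpa [Real.rpow_natCast] using this

lemma tendsto_pow_mul_exp_atBot {b : ℝ} (hb : 0 < b) (n : ℕ) :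
    Tendsto (fun x : ℝ => x ^ n * Real.exp (-b * x ^ 2)) atBot (nhds 0) := by
  have h : Tendsto (fun x : ℝ => ((-1 : ℝ) ^ n) * (x ^ n * Real.exp (-b * x ^ 2)))
      atTop (nhds 0) := by
    simpa using (tendsto_pow_mul_exp_atTop hb n).const_mul ((-1 : ℝ) ^ n)
  have h3 := h.comp tendsto_neg_atBot_atTop
  refine h3.congr fun x => ?_
  simp only [Function.comp_apply, ← mul_assoc, ← mul_pow, neg_sq]
  norm_num

lemma moment_rec {b : ℝ} (hb : 0 < b) (n : ℕ) :
    ∫ x : ℝ, x ^ (n + 2) * Real.exp (-b * x ^ 2)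
      = ((n + 1 : ℝ) / (2 * b)) * ∫ x : ℝ, x ^ n * Real.exp (-b * x ^ 2) := by
  set f : ℝ → ℝ := fun x => x ^ (n + 1) * Real.exp (-b * x ^ 2) with hf
  set g : ℝ → ℝ := fun x => (n + 1 : ℝ) * (x ^ n * Real.exp (-b * x ^ 2))
      - (2 * b) * (x ^ (n + 2) * Real.exp (-b * x ^ 2)) with hg
  have hderiv : ∀ x, HasDerivAt f (g x) x := by
    intro x
    have h1 : HasDerivAt (fun x : ℝ => x ^ (n + 1)) ((n + 1 : ℝ) * x ^ n) x := by
      simpa using hasDerivAt_pow (n + 1) x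
    have h2 : HasDerivAt (fun x : ℝ => Real.exp (-b * x ^ 2))
        ((-b * (2 * x)) * Real.exp (-b * x ^ 2)) x := by
      have h3 : HasDerivAt (fun x : ℝ => -b * x ^ 2) (-b * (2 * x)) x := by
        simpa using (hasDerivAt_pow 2 x).const_mul (-b)
      simpa [mul_comm] using h3.exp
    have : HasDerivAt (fun y : ℝ => y ^ (n + 1) * Real.exp (-b * y ^ 2)) _ x := h1.mul h2
    convert this using 1
    simp only [hg]
    ring
  have hint : Integrable g :=
    ((integrable_pow_mul_exp hb n).const_mul _).sub
      ((integrable_pow_mul_exp hb (n + 2)).const_mul _)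
  have h0 : ∫ x, g x = 0 - 0 :=
    integral_of_hasDerivAt_of_tendsto hderiv hint
      (tendsto_pow_mul_exp_atBot hb (n + 1)) (tendsto_pow_mul_exp_atTop hb (n + 1))
  rw [integral_sub ((integrable_pow_mul_exp hb n).const_mul _)
      ((integrable_pow_mul_exp hb (n + 2)).const_mul _),
    integral_const_mul, integral_const_mul] at h0
  have hb' : (2 * b) ≠ 0 := by positivity
  rw [div_mul_eq_mul_div, eq_div_iff hb']
  linarith [h0]

lemma integral_I0 {b : ℝ} (hb : 0 < b) :
    ∫ x : ℝ, x ^ 0 * Real.exp (-b * x ^ 2) = Real.sqrt (π / b) := by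
  simpa using integral_gaussian b

lemma integral_I2 {b : ℝ} (hb : 0 < b) :
    ∫ x : ℝ, x ^ 2 * Real.exp (-b * x ^ 2) = (1 / (2 * b)) * Real.sqrt (π / b) := by
  have := moment_rec hb 0
  rw [integral_I0 hb] at this
  simpa using this

lemma integral_I4 {b : ℝ} (hb : 0 < b) :
    ∫ x : ℝ, x ^ 4 * Real.exp (-b * x ^ 2)
      = (3 / (2 * b)) * ((1 / (2 * b)) * Real.sqrt (π / b)) := by
  have := moment_rec hb 2
  rw [integral_I2 hb] at this
  norm_num at this ⊢
  linarith [this]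

lemma integral_comp_neg' (f : ℝ → ℝ) : ∫ x : ℝ, f (-x) = ∫ x : ℝ, f x := by
  have A : MeasurableEmbedding fun x : ℝ => -x :=
    (Homeomorph.neg ℝ).isClosedEmbedding.measurableEmbedding
  have h := A.integral_map (μ := volume) f
  rw [Measure.map_neg_eq_self] at h
  exact h.symm

lemma integral_odd {b : ℝ} (k : ℕ) :
    ∫ x : ℝ, x ^ (2 * k + 1) * Real.exp (-b * x ^ 2) = 0 := by
  have h := integral_comp_neg' (fun x : ℝ => x ^ (2 * k + 1) * Real.exp (-b * x ^ 2))
  have heq : ∀ x : ℝ, (-x) ^ (2 * k + 1) * Real.exp (-b * (-x) ^ 2)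
      = -(x ^ (2 * k + 1) * Real.exp (-b * x ^ 2)) := by
    intro x
    rw [Odd.neg_pow ⟨k, by ring⟩, neg_sq]
    ring
  simp only [heq] at h
  rw [integral_neg] at h
  linarith [h]

variable {v : ℝ}

lemma pdf_eq (hv : 0 < v) (x : ℝ) :
    gaussianPDFReal 0 v.toNNReal x
      = (Real.sqrt (2 * π * v))⁻¹ * Real.exp (-(2 * v)⁻¹ * x ^ 2) := by
  rw [gaussianPDFReal, Real.coe_toNNReal v hv.le]
  congr 2
  field_simp
  ring

lemma integral_fun_gaussianReal (hv : 0 < v) (g : ℝ → ℝ) :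
    ∫ x, g x ∂(gaussianReal 0 v.toNNReal)
      = ∫ x, gaussianPDFReal 0 v.toNNReal x * g x := by
  have hv' : v.toNNReal ≠ 0 := by
    simp [Real.toNNReal_eq_zero]; linarith
  rw [gaussianReal_of_var_ne_zero 0 hv']
  have hmeas : Measurable fun x => (gaussianPDFReal 0 v.toNNReal x).toNNReal :=
    (measurable_gaussianPDFReal 0 v.toNNReal).real_toNNReal
  have hd : gaussianPDF 0 v.toNNReal
      = fun x => ((gaussianPDFReal 0 v.toNNReal x).toNNReal : ℝ≥0∞) := by
    funext x
    rw [gaussianPDF, ENNReal.ofReal]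
  rw [hd, integral_withDensity_eq_integral_smul hmeas]
  congr 1
  funext x
  rw [NNReal.smul_def, Real.coe_toNNReal _ (gaussianPDFReal_nonneg 0 _ x), smul_eq_mul]

lemma integrable_fun_gaussianReal (hv : 0 < v) (g : ℝ → ℝ)
    (hg : Integrable (fun x => gaussianPDFReal 0 v.toNNReal x * g x)) :
    Integrable g (gaussianReal 0 v.toNNReal) := by
  have hv' : v.toNNReal ≠ 0 := by
    simp [Real.toNNReal_eq_zero]; linarith
  rw [gaussianReal_of_var_ne_zero 0 hv']
  have hmeas : Measurable fun x => (gaussianPDFReal 0 v.toNNReal x).toNNReal :=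
    (measurable_gaussianPDFReal 0 v.toNNReal).real_toNNReal
  have hd : gaussianPDF 0 v.toNNReal
      = fun x => ((gaussianPDFReal 0 v.toNNReal x).toNNReal : ℝ≥0∞) := by
    funext x
    rw [gaussianPDF, ENNReal.ofReal]
  rw [hd, integrable_withDensity_iff_integrable_coe_smul hmeas]
  refine hg.congr ?_
  filter_upwards with x
  simp [NNReal.smul_def, Real.coe_toNNReal _ (gaussianPDFReal_nonneg 0 _ x)]

lemma integrable_pow_gaussianReal (hv : 0 < v) (n : ℕ) :
    Integrable (fun x : ℝ => x ^ n) (gaussianReal 0 v.toNNReal) := by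
  refine integrable_fun_gaussianReal hv _ ?_
  have hb : (0 : ℝ) < (2 * v)⁻¹ := by positivity
  have := (integrable_pow_mul_exp hb n).const_mul (Real.sqrt (2 * π * v))⁻¹
  refine this.congr ?_
  filter_upwards with x
  rw [pdf_eq hv]
  ring

lemma gaussian_moment_eq (hv : 0 < v) (n : ℕ) :
    ∫ x, x ^ n ∂(gaussianReal 0 v.toNNReal)
      = (Real.sqrt (2 * π * v))⁻¹ * ∫ x : ℝ, x ^ n * Real.exp (-(2 * v)⁻¹ * x ^ 2) := by
  rw [integral_fun_gaussianReal hv, ← integral_const_mul]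
  congr 1
  funext x
  rw [pdf_eq hv]
  ring

lemma sqrt_pi_div (hv : 0 < v) : Real.sqrt (π / (2 * v)⁻¹) = Real.sqrt (2 * π * v) := by
  congr 1
  field_simp

lemma gaussian_moment_one (hv : 0 < v) :
    ∫ x, x ^ 1 ∂(gaussianReal 0 v.toNNReal) = 0 := by
  rw [gaussian_moment_eq hv, show ∫ x : ℝ, x ^ 1 * Real.exp (-(2 * v)⁻¹ * x ^ 2) = 0 from integral_odd 0, mul_zero]

lemma gaussian_moment_three (hv : 0 < v) :
    ∫ x, x ^ 3 ∂(gaussianReal 0 v.toNNReal) = 0 := by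
  rw [gaussian_moment_eq hv, show (3 : ℕ) = 2 * 1 + 1 by norm_num, integral_odd, mul_zero]

lemma sqrt_ne (hv : 0 < v) : Real.sqrt (2 * π * v) ≠ 0 := by
  have : (0:ℝ) < 2 * π * v := by positivity
  positivity

lemma gaussian_moment_two (hv : 0 < v) :
    ∫ x, x ^ 2 ∂(gaussianReal 0 v.toNNReal) = v := by
  have hb : (0 : ℝ) < (2 * v)⁻¹ := by positivity
  rw [gaussian_moment_eq hv, integral_I2 hb, sqrt_pi_div hv]
  have h1 : (1 : ℝ) / (2 * (2 * v)⁻¹) = v := by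
    field_simp
  rw [h1]
  field_simp [sqrt_ne hv]

lemma gaussian_moment_four (hv : 0 < v) :
    ∫ x, x ^ 4 ∂(gaussianReal 0 v.toNNReal) = 3 * v ^ 2 := by
  have hb : (0 : ℝ) < (2 * v)⁻¹ := by positivity
  rw [gaussian_moment_eq hv, integral_I4 hb, sqrt_pi_div hv]
  have h1 : (1 : ℝ) / (2 * (2 * v)⁻¹) = v := by field_simp
  have h2 : (3 : ℝ) / (2 * (2 * v)⁻¹) = 3 * v := by
    field_simp
  rw [h1, h2]
  field_simp [sqrt_ne hv]

end AWGNAux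

/-- The variance of the AWGN information density (in nats) with Gaussian input of
power `P` and noise variance `σ²` equals the dispersion
`P / (P + σ²)`. -/
theorem awgn_information_density_variance
    {Ω : Type*} [MeasureSpace Ω] [IsProbabilityMeasure (ℙ : Measure Ω)]
    (P σ2 : ℝ) (hP : 0 < P) (hσ : 0 < σ2)
    (X ζ : Ω → ℝ) (hX : Measurable X) (hζ : Measurable ζ)
    (hXd : Measure.map X ℙ = gaussianReal 0 P.toNNReal)
    (hζd : Measure.map ζ ℙ = gaussianReal 0 σ2.toNNReal)
    (hindep : IndepFun X ζ ℙ)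
    (W : Ω → ℝ) (hW : ∀ ω, W ω = X ω + ζ ω)
    (pWX : ℝ → ℝ → ℝ)
    (hpWX : ∀ x w, pWX x w = (Real.sqrt (2 * π * σ2))⁻¹ *
      Real.exp (-(w - x) ^ 2 / (2 * σ2)))
    (pW : ℝ → ℝ)
    (hpW : ∀ w, pW w = (Real.sqrt (2 * π * (P + σ2)))⁻¹ *
      Real.exp (-w ^ 2 / (2 * (P + σ2))))
    (G : Ω → ℝ) (hG : ∀ ω, G ω = Real.log (pWX (X ω) (W ω) / pW (W ω))) :
    variance G ℙ = P / (P + σ2) := by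
  have hs : (0:ℝ) < P + σ2 := by linarith
  have hσ2 : σ2 ≠ 0 := ne_of_gt hσ
  have hsne : P + σ2 ≠ 0 := ne_of_gt hs
  have hA : (0:ℝ) < Real.sqrt (2 * π * σ2) := Real.sqrt_pos.mpr (by positivity)
  have hB : (0:ℝ) < Real.sqrt (2 * π * (P + σ2)) := Real.sqrt_pos.mpr (by positivity)
  set c : ℝ := Real.log (Real.sqrt (2 * π * (P + σ2)) * (Real.sqrt (2 * π * σ2))⁻¹) with hc
  set α : ℝ := (2 * (P + σ2))⁻¹ with hα
  set β : ℝ := (P + σ2)⁻¹ with hβ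
  set γ : ℝ := (2 * (P + σ2))⁻¹ - (2 * σ2)⁻¹ with hγ
  -- quadratic representation of G
  have hGrep : ∀ ω, G ω =
      c + α * (X ω) ^ 2 + β * (X ω * ζ ω) + γ * (ζ ω) ^ 2 := by
    intro ω
    rw [hG, hpWX, hpW, hW]
    have h1 : ((Real.sqrt (2 * π * σ2))⁻¹ *
          Real.exp (-(X ω + ζ ω - X ω) ^ 2 / (2 * σ2))) /
        ((Real.sqrt (2 * π * (P + σ2)))⁻¹ *
          Real.exp (-(X ω + ζ ω) ^ 2 / (2 * (P + σ2))))
        = (Real.sqrt (2 * π * (P + σ2)) * (Real.sqrt (2 * π * σ2))⁻¹) *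
          Real.exp (-(X ω + ζ ω - X ω) ^ 2 / (2 * σ2)
            - (-(X ω + ζ ω) ^ 2 / (2 * (P + σ2)))) := by
      rw [Real.exp_sub]
      field_simp
    rw [h1, Real.log_mul (by positivity) (Real.exp_ne_zero _), Real.log_exp]
    have h2 : -(X ω + ζ ω - X ω) ^ 2 / (2 * σ2) - (-(X ω + ζ ω) ^ 2 / (2 * (P + σ2)))
        = α * (X ω) ^ 2 + β * (X ω * ζ ω) + γ * (ζ ω) ^ 2 := by
      rw [hα, hβ, hγ]
      field_simp
      ring
    rw [h2, hc]
    ring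
  -- moments of X and ζ
  have hmapX : ∀ n : ℕ, ∫ ω, (X ω) ^ n ∂ℙ = ∫ x, x ^ n ∂(gaussianReal 0 P.toNNReal) := by
    intro n
    rw [← hXd]
    exact (integral_map hX.aemeasurable
      ((measurable_id.pow_const n).aestronglyMeasurable)).symm
  have hmapζ : ∀ n : ℕ, ∫ ω, (ζ ω) ^ n ∂ℙ = ∫ x, x ^ n ∂(gaussianReal 0 σ2.toNNReal) := by
    intro n
    rw [← hζd]
    exact (integral_map hζ.aemeasurable
      ((measurable_id.pow_const n).aestronglyMeasurable)).symm
  have hintX : ∀ n : ℕ, Integrable (fun ω => (X ω) ^ n) ℙ := by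
    intro n
    have h := AWGNAux.integrable_pow_gaussianReal hP n
    rw [← hXd] at h
    exact (integrable_map_measure ((measurable_id.pow_const n).aestronglyMeasurable)
      hX.aemeasurable).mp h
  have hintζ : ∀ n : ℕ, Integrable (fun ω => (ζ ω) ^ n) ℙ := by
    intro n
    have h := AWGNAux.integrable_pow_gaussianReal hσ n
    rw [← hζd] at h
    exact (integrable_map_measure ((measurable_id.pow_const n).aestronglyMeasurable)
      hζ.aemeasurable).mp h
  have hindmn : ∀ m n : ℕ, IndepFun (fun ω => (X ω) ^ m) (fun ω => (ζ ω) ^ n) ℙ :=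
    fun m n => hindep.comp (measurable_id.pow_const m) (measurable_id.pow_const n)
  have hprodint : ∀ m n : ℕ, Integrable (fun ω => (X ω) ^ m * (ζ ω) ^ n) ℙ :=
    fun m n => (hindmn m n).integrable_mul (hintX m) (hintζ n)
  have hprodval : ∀ m n : ℕ, ∫ ω, (X ω) ^ m * (ζ ω) ^ n ∂ℙ
      = (∫ ω, (X ω) ^ m ∂ℙ) * (∫ ω, (ζ ω) ^ n ∂ℙ) :=
    fun m n => (hindmn m n).integral_mul_eq_mul_integral
      ((hX.pow_const m).aestronglyMeasurable) ((hζ.pow_const n).aestronglyMeasurable)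
  have hX0 : ∫ ω, (X ω) ^ 0 ∂ℙ = 1 := by simp
  have hζ0 : ∫ ω, (ζ ω) ^ 0 ∂ℙ = 1 := by simp
  have hX1 : ∫ ω, (X ω) ^ 1 ∂ℙ = 0 := by rw [hmapX]; exact AWGNAux.gaussian_moment_one hP
  have hζ1 : ∫ ω, (ζ ω) ^ 1 ∂ℙ = 0 := by rw [hmapζ]; exact AWGNAux.gaussian_moment_one hσ
  have hX2 : ∫ ω, (X ω) ^ 2 ∂ℙ = P := by rw [hmapX]; exact AWGNAux.gaussian_moment_two hP
  have hζ2 : ∫ ω, (ζ ω) ^ 2 ∂ℙ = σ2 := by rw [hmapζ]; exact AWGNAux.gaussian_moment_two hσ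
  have hX3 : ∫ ω, (X ω) ^ 3 ∂ℙ = 0 := by rw [hmapX]; exact AWGNAux.gaussian_moment_three hP
  have hζ3 : ∫ ω, (ζ ω) ^ 3 ∂ℙ = 0 := by rw [hmapζ]; exact AWGNAux.gaussian_moment_three hσ
  have hX4 : ∫ ω, (X ω) ^ 4 ∂ℙ = 3 * P ^ 2 := by
    rw [hmapX]; exact AWGNAux.gaussian_moment_four hP
  have hζ4 : ∫ ω, (ζ ω) ^ 4 ∂ℙ = 3 * σ2 ^ 2 := by
    rw [hmapζ]; exact AWGNAux.gaussian_moment_four hσ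
  -- measurability and integrability of G
  have hGfun : G = fun ω => c + α * ((X ω) ^ 2 * (ζ ω) ^ 0) + β * ((X ω) ^ 1 * (ζ ω) ^ 1)
      + γ * ((X ω) ^ 0 * (ζ ω) ^ 2) := by
    funext ω; rw [hGrep ω]; ring
  have hGint : Integrable G ℙ := by
    rw [hGfun]
    exact (((integrable_const _).add ((hprodint 2 0).const_mul _)).add
      ((hprodint 1 1).const_mul _)).add ((hprodint 0 2).const_mul _)
  have hG2fun : (fun ω => (G ω) ^ 2) = fun ω =>
      c ^ 2 + (2 * c * α) * ((X ω) ^ 2 * (ζ ω) ^ 0) + (2 * c * β) * ((X ω) ^ 1 * (ζ ω) ^ 1)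
      + (2 * c * γ) * ((X ω) ^ 0 * (ζ ω) ^ 2) + α ^ 2 * ((X ω) ^ 4 * (ζ ω) ^ 0)
      + (2 * α * β) * ((X ω) ^ 3 * (ζ ω) ^ 1) + (β ^ 2 + 2 * α * γ) * ((X ω) ^ 2 * (ζ ω) ^ 2)
      + (2 * β * γ) * ((X ω) ^ 1 * (ζ ω) ^ 3) + γ ^ 2 * ((X ω) ^ 0 * (ζ ω) ^ 4) := by
    funext ω; rw [hGrep ω]; ring
  have hG2int : Integrable (fun ω => (G ω) ^ 2) ℙ := by
    rw [hG2fun]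
    exact ((((((((integrable_const _).add ((hprodint 2 0).const_mul _)).add
      ((hprodint 1 1).const_mul _)).add ((hprodint 0 2).const_mul _)).add
      ((hprodint 4 0).const_mul _)).add ((hprodint 3 1).const_mul _)).add
      ((hprodint 2 2).const_mul _)).add ((hprodint 1 3).const_mul _)).add
      ((hprodint 0 4).const_mul _)
  have hmem : MemLp G 2 ℙ :=
    (memLp_two_iff_integrable_sq hGint.aestronglyMeasurable).mpr (by exact hG2int)
  -- expectation of G
  have hEG : ∫ ω, G ω ∂ℙ = c + α * P + γ * σ2 := by
    have h0 : ∫ ω, G ω ∂ℙ = ∫ ω, (c + α * ((X ω) ^ 2 * (ζ ω) ^ 0)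
        + β * ((X ω) ^ 1 * (ζ ω) ^ 1) + γ * ((X ω) ^ 0 * (ζ ω) ^ 2)) ∂ℙ :=
      integral_congr_ae (Filter.Eventually.of_forall fun ω => by rw [hGrep ω]; ring)
    have K0 : Integrable (fun _ : Ω => c) ℙ := by exact integrable_const c
    have K1 : Integrable (fun ω => c + α * ((X ω) ^ 2 * (ζ ω) ^ 0)) ℙ := by
      exact K0.add ((hprodint 2 0).const_mul _)
    have K2 : Integrable (fun ω => c + α * ((X ω) ^ 2 * (ζ ω) ^ 0) + β * ((X ω) ^ 1 * (ζ ω) ^ 1)) ℙ := by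
      exact K1.add ((hprodint 1 1).const_mul _)
    rw [h0, integral_add K2 ((hprodint 0 2).const_mul _),
      integral_add K1 ((hprodint 1 1).const_mul _),
      integral_add K0 ((hprodint 2 0).const_mul _),
      integral_const, integral_const_mul, integral_const_mul, integral_const_mul,
      hprodval 2 0, hprodval 1 1, hprodval 0 2, hX0, hζ0, hX1, hζ1, hX2, hζ2]
    simp
  -- expectation of G^2
  have hEG2 : ∫ ω, (G ω) ^ 2 ∂ℙ = c ^ 2 + (2 * c * α) * P + (2 * c * γ) * σ2
      + α ^ 2 * (3 * P ^ 2) + (β ^ 2 + 2 * α * γ) * (P * σ2) + γ ^ 2 * (3 * σ2 ^ 2) := by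
    have h0 : ∫ ω, (G ω) ^ 2 ∂ℙ = ∫ ω, (c ^ 2 + (2 * c * α) * ((X ω) ^ 2 * (ζ ω) ^ 0)
        + (2 * c * β) * ((X ω) ^ 1 * (ζ ω) ^ 1)
        + (2 * c * γ) * ((X ω) ^ 0 * (ζ ω) ^ 2) + α ^ 2 * ((X ω) ^ 4 * (ζ ω) ^ 0)
        + (2 * α * β) * ((X ω) ^ 3 * (ζ ω) ^ 1)
        + (β ^ 2 + 2 * α * γ) * ((X ω) ^ 2 * (ζ ω) ^ 2)
        + (2 * β * γ) * ((X ω) ^ 1 * (ζ ω) ^ 3) + γ ^ 2 * ((X ω) ^ 0 * (ζ ω) ^ 4)) ∂ℙ :=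
      integral_congr_ae (Filter.Eventually.of_forall fun ω => by
        show G ω ^ 2 = _
        rw [hGrep ω]; ring)
    have J0 : Integrable (fun _ : Ω => c ^ 2) ℙ := by exact integrable_const (c ^ 2)
    have J1 : Integrable (fun ω => c ^ 2 + (2 * c * α) * ((X ω) ^ 2 * (ζ ω) ^ 0)) ℙ := by
      exact J0.add ((hprodint 2 0).const_mul _)
    have J2 : Integrable (fun ω => c ^ 2 + (2 * c * α) * ((X ω) ^ 2 * (ζ ω) ^ 0) + (2 * c * β) * ((X ω) ^ 1 * (ζ ω) ^ 1)) ℙ := by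
      exact J1.add ((hprodint 1 1).const_mul _)
    have J3 : Integrable (fun ω => c ^ 2 + (2 * c * α) * ((X ω) ^ 2 * (ζ ω) ^ 0) + (2 * c * β) * ((X ω) ^ 1 * (ζ ω) ^ 1) + (2 * c * γ) * ((X ω) ^ 0 * (ζ ω) ^ 2)) ℙ := by
      exact J2.add ((hprodint 0 2).const_mul _)
    have J4 : Integrable (fun ω => c ^ 2 + (2 * c * α) * ((X ω) ^ 2 * (ζ ω) ^ 0) + (2 * c * β) * ((X ω) ^ 1 * (ζ ω) ^ 1) + (2 * c * γ) * ((X ω) ^ 0 * (ζ ω) ^ 2) + (α ^ 2) * ((X ω) ^ 4 * (ζ ω) ^ 0)) ℙ := by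
      exact J3.add ((hprodint 4 0).const_mul _)
    have J5 : Integrable (fun ω => c ^ 2 + (2 * c * α) * ((X ω) ^ 2 * (ζ ω) ^ 0) + (2 * c * β) * ((X ω) ^ 1 * (ζ ω) ^ 1) + (2 * c * γ) * ((X ω) ^ 0 * (ζ ω) ^ 2) + (α ^ 2) * ((X ω) ^ 4 * (ζ ω) ^ 0) + (2 * α * β) * ((X ω) ^ 3 * (ζ ω) ^ 1)) ℙ := by
      exact J4.add ((hprodint 3 1).const_mul _)
    have J6 : Integrable (fun ω => c ^ 2 + (2 * c * α) * ((X ω) ^ 2 * (ζ ω) ^ 0) + (2 * c * β) * ((X ω) ^ 1 * (ζ ω) ^ 1) + (2 * c * γ) * ((X ω) ^ 0 * (ζ ω) ^ 2) + (α ^ 2) * ((X ω) ^ 4 * (ζ ω) ^ 0) + (2 * α * β) * ((X ω) ^ 3 * (ζ ω) ^ 1) + ((β ^ 2 + 2 * α * γ)) * ((X ω) ^ 2 * (ζ ω) ^ 2)) ℙ := by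
      exact J5.add ((hprodint 2 2).const_mul _)
    have J7 : Integrable (fun ω => c ^ 2 + (2 * c * α) * ((X ω) ^ 2 * (ζ ω) ^ 0) + (2 * c * β) * ((X ω) ^ 1 * (ζ ω) ^ 1) + (2 * c * γ) * ((X ω) ^ 0 * (ζ ω) ^ 2) + (α ^ 2) * ((X ω) ^ 4 * (ζ ω) ^ 0) + (2 * α * β) * ((X ω) ^ 3 * (ζ ω) ^ 1) + ((β ^ 2 + 2 * α * γ)) * ((X ω) ^ 2 * (ζ ω) ^ 2) + (2 * β * γ) * ((X ω) ^ 1 * (ζ ω) ^ 3)) ℙ := by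
      exact J6.add ((hprodint 1 3).const_mul _)
    rw [h0, integral_add J7 ((hprodint 0 4).const_mul _),
      integral_add J6 ((hprodint 1 3).const_mul _),
      integral_add J5 ((hprodint 2 2).const_mul _),
      integral_add J4 ((hprodint 3 1).const_mul _),
      integral_add J3 ((hprodint 4 0).const_mul _),
      integral_add J2 ((hprodint 0 2).const_mul _),
      integral_add J1 ((hprodint 1 1).const_mul _),
      integral_add J0 ((hprodint 2 0).const_mul _),
      integral_const, integral_const_mul, integral_const_mul, integral_const_mul,
      integral_const_mul, integral_const_mul, integral_const_mul, integral_const_mul,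
      integral_const_mul,
      hprodval 2 0, hprodval 1 1, hprodval 0 2, hprodval 4 0, hprodval 3 1,
      hprodval 2 2, hprodval 1 3, hprodval 0 4,
      hX0, hζ0, hX1, hζ1, hX2, hζ2, hX3, hζ3, hX4, hζ4]
    simp
  -- conclude
  rw [variance_eq_sub hmem]
  have h2 : ∫ ω, (G ^ 2) ω ∂ℙ = ∫ ω, (G ω) ^ 2 ∂ℙ := rfl
  rw [h2, hEG2, hEG, hα, hβ, hγ]
  field_simp
  ring
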